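/- The Fenchel transform F*(μ̂) = sup_{g ∈ C⁰(Σ̂)} [∫ g dμ̂ − max(A+g)] of the convex functional F(g) = max(A+g) equals −∫ A dμ̂ when μ̂ is a Borel probability measure, and equals +∞ when μ̂ is a signed measure that is not a probability measure. -/

import Mathlib

open MeasureTheory

section AubryMather

variable {r : ℕ} {M : Fin r → Fin r → Bool}

/-- One-sided subshift of finite type on `r` symbols with transition matrix `M`. -/
abbrev SigSp (r : ℕ) (M : Fin r → Fin r → Bool) :=
  {x : ℕ → Fin r // ∀ j, M (x j) (x (j + 1)) = true}

/-- The dual subshift, with transposed transition matrix (coordinates `(…, y₁, y₀)`). -/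
abbrev DualSp (r : ℕ) (M : Fin r → Fin r → Bool) :=
  {y : ℕ → Fin r // ∀ j, M (y (j + 1)) (y j) = true}

/-- The natural extension `Σ̂ ⊂ Σ* × Σ`: pairs `(y,x)` with `M (y₀, x₀) = 1`. -/
abbrev NatExt (r : ℕ) (M : Fin r → Fin r → Bool) :=
  {p : DualSp r M × SigSp r M // M (p.1.1 0) (p.2.1 0) = true}

/-- Prepend a symbol to a sequence. -/
def prepend (a : Fin r) (x : ℕ → Fin r) : ℕ → Fin r
  | 0 => a
  | m + 1 => x m

/-- The left shift `σ` on `Σ`. -/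
def shiftS (x : SigSp r M) : SigSp r M := ⟨fun n => x.1 (n + 1), fun j => x.2 (j + 1)⟩

/-- The projection `π₁(y,x) = x`. -/
def proj1 (p : NatExt r M) : SigSp r M := p.1.2

/-- `τ(y,x) = τ_y(x) = (y₀, x₀, x₁, …)`. -/
def tau (p : NatExt r M) : SigSp r M :=
  ⟨prepend (p.1.1.1 0) p.1.2.1, by
    intro j
    cases j with
    | zero => exact p.2
    | succ m => exact p.1.2.2 m⟩

/-- The two-sided shift `σ̂` on the natural extension. -/
def hatShift (p : NatExt r M) : NatExt r M :=
  ⟨(⟨prepend (p.1.2.1 0) p.1.1.1, by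
      intro j
      cases j with
      | zero => exact p.2
      | succ m => exact p.1.1.2 m⟩, shiftS p.1.2), p.1.2.2 0⟩

/-- Holonomic probability measures on `Σ̂`. -/
def Holonomic (μ : Measure (NatExt r M)) : Prop :=
  IsProbabilityMeasure μ ∧
    ∀ f : C(SigSp r M, ℝ), (∫ p, f (tau p) ∂μ) = ∫ p, f (proj1 p) ∂μ

/-- `β_A`, the maximal holonomic value of the potential `A`. -/
noncomputable def betaA (A : NatExt r M → ℝ) : ℝ :=
  ⨆ μ : {μ : Measure (NatExt r M) // Holonomic μ}, ∫ p, A p ∂(μ.1)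

open Classical in
/-- The metric `d(x, x̄) = λ^{min {j : x_j ≠ x̄_j}}` on `Σ`. -/
noncomputable def dS (lam : ℝ) (x x' : SigSp r M) : ℝ :=
  if h : x.1 = x'.1 then 0
  else lam ^ Nat.find (show ∃ j, x.1 j ≠ x'.1 j from Function.ne_iff.mp h)

open Classical in
/-- The analogous metric on `Σ*`. -/
noncomputable def dDual (lam : ℝ) (y y' : DualSp r M) : ℝ :=
  if h : y.1 = y'.1 then 0
  else lam ^ Nat.find (show ∃ j, y.1 j ≠ y'.1 j from Function.ne_iff.mp h)

/-- The metric on `Σ̂ ⊂ Σ* × Σ`. -/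
noncomputable def dHat (lam : ℝ) (p q : NatExt r M) : ℝ :=
  max (dDual lam p.1.1 q.1.1) (dS lam p.1.2 q.1.2)

/-- `u` is `θ`-Hölder on `Σ` with constant `C`. -/
def HolderOnSig (lam θ C : ℝ) (u : SigSp r M → ℝ) : Prop :=
  ∀ x x', |u x - u x'| ≤ C * (dS lam x x') ^ θ

/-- `A` is `θ`-Hölder on `Σ̂` with constant `C`. -/
def HolderOnExt (lam θ C : ℝ) (A : NatExt r M → ℝ) : Prop :=
  ∀ p q, |A p - A q| ≤ C * (dHat lam p q) ^ θ

/-- `(Σ,σ)` is (topologically) transitive. -/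
def TransitiveShift (r : ℕ) (M : Fin r → Fin r → Bool) : Prop :=
  ∀ U V : Set (SigSp r M), IsOpen U → IsOpen V → U.Nonempty → V.Nonempty →
    ∃ n : ℕ, (shiftS^[n] '' U ∩ V).Nonempty

/-- `(Σ,σ)` is topologically mixing. -/
def MixingShift (r : ℕ) (M : Fin r → Fin r → Bool) : Prop :=
  ∀ U V : Set (SigSp r M), IsOpen U → IsOpen V → U.Nonempty → V.Nonempty →
    ∃ K : ℕ, ∀ k > K, (shiftS^[k] '' U ∩ V).Nonempty

/-- A chain of length `k` starting at `x`: `x⁰ = x`, `x^{j+1} = τ_{yʲ}(xʲ)`. -/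
def IsChainFrom (x : SigSp r M) (k : ℕ) (p : ℕ → NatExt r M) : Prop :=
  (1 ≤ k → proj1 (p 0) = x) ∧ ∀ j, j + 1 < k → proj1 (p (j + 1)) = tau (p j)

/-- A path in `P(x, x̄, ε)`: begins at `x̄`, ends within `ε` of `x`. -/
def InPath (lam ε : ℝ) (x xbar : SigSp r M) (k : ℕ) (p : ℕ → NatExt r M) : Prop :=
  1 ≤ k ∧ proj1 (p 0) = xbar ∧ (∀ j, j + 1 < k → proj1 (p (j + 1)) = tau (p j)) ∧
    dS lam (tau (p (k - 1))) x < ε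

/-- `S_A^ε(x, x̄)`. -/
noncomputable def SAeps (lam : ℝ) (A : NatExt r M → ℝ) (ε : ℝ) (x xbar : SigSp r M) : EReal :=
  sInf {v : EReal | ∃ k p, InPath lam ε x xbar k p ∧
    v = ((- ∑ j ∈ Finset.range k, (A (p j) - betaA A) : ℝ) : EReal)}

/-- The Mañé potential `S_A(x, x̄) = lim_{ε→0} S_A^ε(x, x̄)`. -/
noncomputable def ManePot (lam : ℝ) (A : NatExt r M → ℝ) (x xbar : SigSp r M) : EReal :=
  ⨆ (ε : ℝ) (_ : 0 < ε), SAeps lam A ε x xbar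

/-- `x` is non-wandering with respect to `A`. -/
def NonWand (lam : ℝ) (A : NatExt r M → ℝ) (x : SigSp r M) : Prop :=
  ∀ ε > 0, ∃ k p, InPath lam ε x x k p ∧
    |∑ j ∈ Finset.range k, (A (p j) - betaA A)| < ε

/-- `x` is `u`-connected to `x̄`. -/
def UConnected (lam : ℝ) (A : NatExt r M → ℝ) (u : SigSp r M → ℝ)
    (x xbar : SigSp r M) : Prop :=
  ∀ ε > 0, ∃ k p, InPath lam ε x xbar k p ∧
    |∑ j ∈ Finset.range k, (A (p j) - betaA A) - (u x - u xbar)| < ε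

/-- A (continuous) sub-action for `A`. -/
def SubAction (A : NatExt r M → ℝ) (u : SigSp r M → ℝ) : Prop :=
  Continuous u ∧ ∀ p : NatExt r M, u (proj1 p) ≤ u (tau p) - A p + betaA A

/-- A calibrated sub-action for `A`:
`u(x) = min_{y ∈ Σ*_x} [u(τ_y(x)) − A(y,x) + β_A]`. -/
def Calibrated (A : NatExt r M → ℝ) (u : SigSp r M → ℝ) : Prop :=
  Continuous u ∧ ∀ x : SigSp r M,
    IsLeast {v : ℝ | ∃ p : NatExt r M, proj1 p = x ∧ v = u (tau p) - A p + betaA A} (u x)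

/-- The candidate maximal sub-action `u_A` (for `β_A = 0`). -/
noncomputable def uMax (A : NatExt r M → ℝ) (x : SigSp r M) : ℝ :=
  sInf {v : ℝ | ∃ k p, IsChainFrom x k p ∧ v = -∑ j ∈ Finset.range k, A (p j)}

/-- The operator `L_ρ(f)(x) = ρ · min_{y ∈ Σ*_x} [f(τ_y(x)) − A(y,x)]`. -/
noncomputable def Lrho (A : NatExt r M → ℝ) (rho : ℝ) (f : SigSp r M → ℝ)
    (x : SigSp r M) : ℝ :=
  rho * sInf {v : ℝ | ∃ p : NatExt r M, proj1 p = x ∧ v = f (tau p) - A p}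

end AubryMather

/-- The (topological) support of a measure. -/
def msupport {X : Type*} [TopologicalSpace X] [MeasurableSpace X]
    (μ : MeasureTheory.Measure X) : Set X :=
  {p | ∀ U : Set X, IsOpen U → p ∈ U → 0 < μ U}


/-- A signed measure which is a (Borel) probability measure. -/
def IsProbSigned {X : Type*} [MeasurableSpace X] (μ : MeasureTheory.SignedMeasure X) : Prop :=
  (∀ s : Set X, MeasurableSet s → 0 ≤ μ s) ∧ μ Set.univ = 1

/-- The integral of `g` with respect to a signed measure, via the Jordan decomposition. -/
noncomputable def signedInt {X : Type*} [MeasurableSpace X]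
    (μ : MeasureTheory.SignedMeasure X) (g : X → ℝ) : ℝ :=
  (∫ x, g x ∂μ.toJordanDecomposition.posPart) -
    ∫ x, g x ∂μ.toJordanDecomposition.negPart

/-- The Fenchel transform `F*(μ̂) = sup_{g ∈ C⁰(Σ̂)} [∫ g dμ̂ − max(A+g)]`. -/
noncomputable def FenchelFStar {X : Type*} [MeasurableSpace X] [TopologicalSpace X]
    (A : X → ℝ) (μ : MeasureTheory.SignedMeasure X) : EReal :=
  ⨆ g : C(X, ℝ), (((signedInt μ g - ⨆ x, (A x + g x)) : ℝ) : EReal)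

private lemma signed_apply_eq {X : Type*} [MeasurableSpace X] (μ : SignedMeasure X)
    {s : Set X} (hs : MeasurableSet s) :
    μ s = (μ.toJordanDecomposition.posPart s).toReal -
      (μ.toJordanDecomposition.negPart s).toReal := by
  conv_lhs => rw [← μ.toSignedMeasure_toJordanDecomposition]
  rw [JordanDecomposition.toSignedMeasure, VectorMeasure.sub_apply,
    Measure.toSignedMeasure_apply_measurable hs, Measure.toSignedMeasure_apply_measurable hs]
  rfl

private lemma ereal_eq_top_of_forall_le (x : EReal) (h : ∀ M : ℝ, (M : EReal) ≤ x) : x = ⊤ := by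
  induction x using EReal.rec with
  | bot => exact absurd (h 0) (by simp)
  | coe r =>
    have := EReal.coe_le_coe_iff.mp (h (r + 1))
    linarith
  | top => rfl

private lemma ereal_iSup_eq_top {ι : Sort*} (f : ι → EReal)
    (h : ∀ M : ℝ, ∃ i, (M : EReal) ≤ f i) : ⨆ i, f i = ⊤ :=
  ereal_eq_top_of_forall_le _ fun M => (h M).elim fun i hi => hi.trans (le_iSup f i)

private lemma cont_integrable {X : Type*} [MetricSpace X] [CompactSpace X]
    [MeasurableSpace X] [BorelSpace X]
    (ν : Measure X) [IsFiniteMeasure ν] {f : X → ℝ} (hf : Continuous f) : Integrable f ν :=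
  hf.integrable_of_hasCompactSupport (HasCompactSupport.of_compactSpace f)

private lemma integral_le_iSup' {X : Type*} [MetricSpace X] [CompactSpace X] [Nonempty X]
    [MeasurableSpace X] [BorelSpace X]
    (ν : Measure X) [IsProbabilityMeasure ν] {f : X → ℝ} (hf : Continuous f) :
    ∫ x, f x ∂ν ≤ ⨆ x, f x := by
  have hb : BddAbove (Set.range f) := (isCompact_range hf).bddAbove
  calc ∫ x, f x ∂ν ≤ ∫ _x, (⨆ x, f x) ∂ν :=
        integral_mono (cont_integrable ν hf) (integrable_const _) fun x => le_ciSup hb x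
    _ = ⨆ x, f x := by simp

theorem fenchel_transform_eval
    {X : Type*} [MetricSpace X] [CompactSpace X] [Nonempty X]
    [MeasurableSpace X] [BorelSpace X]
    (A : X → ℝ) (hA : Continuous A) (μ : MeasureTheory.SignedMeasure X) :
    (IsProbSigned μ → FenchelFStar A μ = ((-(signedInt μ A) : ℝ) : EReal)) ∧
    (¬ IsProbSigned μ → FenchelFStar A μ = ⊤) := by
  have hbA : BddAbove (Set.range A) := (isCompact_range hA).bddAbove
  constructor
  · rintro ⟨hpos, huniv⟩
    obtain ⟨t, ht, htp, htn⟩ := μ.toJordanDecomposition.mutuallySingular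
    -- negative part vanishes
    have hνnt : μ.toJordanDecomposition.negPart t = 0 := by
      have h0 : 0 ≤ μ t := hpos t ht
      rw [signed_apply_eq μ ht, htp] at h0
      have h1 : (μ.toJordanDecomposition.negPart t).toReal = 0 := by
        have := ENNReal.toReal_nonneg (a := μ.toJordanDecomposition.negPart t)
        simp at h0
        linarith
      exact ((ENNReal.toReal_eq_zero_iff _).mp h1).resolve_right (measure_ne_top _ t)
    have hνn0 : μ.toJordanDecomposition.negPart = 0 := by
      apply Measure.measure_univ_eq_zero.mp
      have hle : μ.toJordanDecomposition.negPart Set.univ ≤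
          μ.toJordanDecomposition.negPart t + μ.toJordanDecomposition.negPart tᶜ := by
        rw [← Set.union_compl_self t]; exact measure_union_le _ _
      rw [hνnt, htn] at hle
      simpa using hle
    have hSI : ∀ f : X → ℝ, signedInt μ f = ∫ x, f x ∂μ.toJordanDecomposition.posPart := by
      intro f
      rw [signedInt, hνn0, integral_zero_measure, sub_zero]
    have hp1 : μ.toJordanDecomposition.posPart Set.univ = 1 := by
      have h := signed_apply_eq μ MeasurableSet.univ
      rw [huniv, hνn0] at h
      simp at h
      rw [← ENNReal.ofReal_toReal (measure_ne_top μ.toJordanDecomposition.posPart Set.univ),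
        ← h, ENNReal.ofReal_one]
    haveI : IsProbabilityMeasure μ.toJordanDecomposition.posPart := ⟨hp1⟩
    apply le_antisymm
    · apply iSup_le
      intro g
      apply EReal.coe_le_coe_iff.mpr
      have h1 : signedInt μ A + signedInt μ g ≤ ⨆ x, (A x + g x) := by
        rw [hSI A, hSI g, ← integral_add (cont_integrable _ hA) (cont_integrable _ g.continuous)]
        exact integral_le_iSup' _ (hA.add g.continuous)
      linarith
    · have key : signedInt μ (fun x => -A x) - (⨆ x, (A x + -A x)) = -(signedInt μ A) := by
        have h0 : (⨆ x, (A x + -A x)) = (0 : ℝ) := by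
          simp [ciSup_const]
        rw [h0, sub_zero, hSI, hSI, integral_neg]
      have hle := le_iSup
        (fun g : C(X, ℝ) => (((signedInt μ g - ⨆ x, (A x + g x)) : ℝ) : EReal))
        (ContinuousMap.mk (fun x => -A x) hA.neg)
      rw [FenchelFStar]
      simp only [ContinuousMap.coe_mk] at hle
      rw [key] at hle
      exact hle
  · intro hnp
    rw [FenchelFStar]
    apply ereal_iSup_eq_top
    intro M
    by_cases hpos : ∀ s : Set X, MeasurableSet s → 0 ≤ μ s
    · -- total mass ≠ 1; use constants
      have huniv : μ Set.univ ≠ 1 := fun h => hnp ⟨hpos, h⟩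
      set a := μ Set.univ with ha
      set c := (M + ⨆ x, A x) / (a - 1) with hc
      refine ⟨ContinuousMap.mk (fun _ => c) continuous_const, ?_⟩
      apply EReal.coe_le_coe_iff.mpr
      simp only [ContinuousMap.coe_mk]
      have hSI : signedInt μ (fun _ : X => c) = c * a := by
        rw [signedInt, integral_const, integral_const, smul_eq_mul, smul_eq_mul,
          ha, signed_apply_eq μ MeasurableSet.univ]
        simp only [Measure.real]
        ring
      have hsup : (⨆ x, (A x + c)) ≤ (⨆ x, A x) + c :=
        ciSup_le fun x => add_le_add_left (le_ciSup hbA x) c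
      have hca : c * (a - 1) = M + ⨆ x, A x :=
        div_mul_cancel₀ _ (sub_ne_zero.mpr huniv)
      rw [hSI]
      nlinarith [hsup, hca]
    · push_neg at hpos
      obtain ⟨s, hs, hμs⟩ := hpos
      have happ := signed_apply_eq μ hs
      set νp := μ.toJordanDecomposition.posPart with hνp
      set νn := μ.toJordanDecomposition.negPart with hνn
      set ε := -(μ s) with hε
      have hε0 : 0 < ε := by simp [hε]; linarith
      have hεq : (ENNReal.ofReal (ε / 4)) ≠ 0 := by
        simp only [ne_eq, ENNReal.ofReal_eq_zero, not_le]
        positivity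
      obtain ⟨U, hsU, hUopen, hU⟩ := Set.exists_isOpen_lt_add s (μ := νp) (measure_ne_top νp s) hεq
      obtain ⟨K, hKs, hKcomp, hK⟩ := hs.exists_isCompact_lt_add (μ := νn) (measure_ne_top νn s) hεq
      have hdisj : Disjoint Uᶜ K := Set.disjoint_left.mpr fun x hx hxK => hx (hsU (hKs hxK))
      obtain ⟨f, hf0, hf1, hf01⟩ :=
        exists_continuous_zero_one_of_isClosed hUopen.isClosed_compl hKcomp.isClosed hdisj
      -- integral bounds
      have hintp : ∫ x, f x ∂νp ≤ (νp U).toReal := by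
        have hle : (f : X → ℝ) ≤ U.indicator (fun _ => (1 : ℝ)) := by
          intro x
          by_cases hx : x ∈ U
          · simp [Set.indicator_of_mem hx, (hf01 x).2]
          · rw [Set.indicator_of_notMem hx]
            simpa using (hf0 hx).le
        calc ∫ x, f x ∂νp ≤ ∫ x, U.indicator (fun _ => (1 : ℝ)) x ∂νp :=
              integral_mono (cont_integrable _ f.continuous)
                ((integrable_const 1).indicator hUopen.measurableSet) hle
          _ = (νp U).toReal := by rw [integral_indicator_const _ hUopen.measurableSet]; simp; rfl
      have hintn : (νn K).toReal ≤ ∫ x, f x ∂νn := by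
        have hle : K.indicator (fun _ => (1 : ℝ)) ≤ (f : X → ℝ) := by
          intro x
          by_cases hx : x ∈ K
          · rw [Set.indicator_of_mem hx]
            simpa using (hf1 hx).ge
          · simp [Set.indicator_of_notMem hx, (hf01 x).1]
        calc (νn K).toReal = ∫ x, K.indicator (fun _ => (1 : ℝ)) x ∂νn := by
              rw [integral_indicator_const _ hKcomp.isClosed.measurableSet]; simp; rfl
          _ ≤ ∫ x, f x ∂νn :=
              integral_mono ((integrable_const 1).indicator hKcomp.isClosed.measurableSet)
                (cont_integrable _ f.continuous) hle
      have htU : (νp U).toReal ≤ (νp s).toReal + ε / 4 := by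
        have h1 := ENNReal.toReal_mono (by finiteness) hU.le
        rwa [ENNReal.toReal_add (measure_ne_top _ _) ENNReal.ofReal_ne_top,
          ENNReal.toReal_ofReal (by positivity)] at h1
      have htK : (νn s).toReal ≤ (νn K).toReal + ε / 4 := by
        have h1 := ENNReal.toReal_mono (by finiteness) hK.le
        rwa [ENNReal.toReal_add (measure_ne_top _ _) ENNReal.ofReal_ne_top,
          ENNReal.toReal_ofReal (by positivity)] at h1
      have hgap : ε / 2 ≤ ∫ x, f x ∂νn - ∫ x, f x ∂νp := by
        have : (νp s).toReal - (νn s).toReal = -ε := by rw [← happ, hε, neg_neg]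
        linarith
      set c := (2 / ε) * max 0 (M + ⨆ x, A x) with hc
      have hc0 : 0 ≤ c := mul_nonneg (by positivity) (le_max_left _ _)
      refine ⟨ContinuousMap.mk (fun x => -c * f x) (continuous_const.mul f.continuous), ?_⟩
      apply EReal.coe_le_coe_iff.mpr
      simp only [ContinuousMap.coe_mk]
      have hSI : signedInt μ (fun x => -c * f x) = c * (∫ x, f x ∂νn - ∫ x, f x ∂νp) := by
        rw [signedInt, ← hνp, ← hνn, integral_const_mul, integral_const_mul]
        ring
      have hsup : (⨆ x, (A x + -c * f x)) ≤ ⨆ x, A x := by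
        apply ciSup_le
        intro x
        have : -c * f x ≤ 0 := mul_nonpos_of_nonpos_of_nonneg (by linarith) (hf01 x).1
        have h2 := le_ciSup hbA x
        linarith
      have hterm : c * (ε / 2) ≤ c * (∫ x, f x ∂νn - ∫ x, f x ∂νp) :=
        mul_le_mul_of_nonneg_left hgap hc0
      have hcε : c * (ε / 2) = max 0 (M + ⨆ x, A x) := by
        rw [hc]; field_simp
      have hM : M + ⨆ x, A x ≤ max 0 (M + ⨆ x, A x) := le_max_right _ _
      rw [hSI]
      linarith
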